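/- Let (φ(n))_{n≥1} be a positive nondecreasing sequence. If Σ_{n≥1} 1/φ(n) < ∞, then for Lebesgue-almost every x ∈ (0,θ) one has limsup_{N→∞} L_N(x)/φ(N) = 0; if Σ_{n≥1} 1/φ(n) = ∞, then for Lebesgue-almost every x ∈ (0,θ) one has limsup_{N→∞} L_N(x)/φ(N) = ∞. In particular, for almost every x the limsup is either 0 or ∞. -/

import Mathlib

noncomputable section
open MeasureTheory Filter Set
open Topology

namespace Theta

/-- θ = 1/√m -/
def th (m : ℕ) : ℝ := 1 / Real.sqrt m

/-- The θ-expansion map T_θ on [0,θ]. -/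
def T (m : ℕ) (x : ℝ) : ℝ := if x = 0 then 0 else 1 / x - th m * ⌊1 / (x * th m)⌋₊

/-- The n-th digit a_n(x) (n ≥ 1), a_n(x) = a_1(T_θ^{n-1} x) with a_1(x) = ⌊1/(xθ)⌋. -/
def a (m n : ℕ) (x : ℝ) : ℕ := ⌊1 / ((T m)^[n - 1] x * th m)⌋₊

/-- Ω: the irrationals in (0,θ). -/
def Omega (m : ℕ) : Set ℝ := {x | x ∈ Set.Ioo 0 (th m) ∧ Irrational x}

/-- Convergent numerators, shifted: `p m x (n+1)` is p_n(x), `p m x 0` is p_{-1} = 1. -/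
def p (m : ℕ) (x : ℝ) : ℕ → ℝ
  | 0 => 1
  | 1 => 0
  | n + 2 => (a m (n + 1) x) * th m * p m x (n + 1) + p m x n

/-- Convergent denominators, shifted: `q m x (n+1)` is q_n(x), `q m x 0` is q_{-1} = 0. -/
def q (m : ℕ) (x : ℝ) : ℕ → ℝ
  | 0 => 0
  | 1 => 1
  | n + 2 => (a m (n + 1) x) * th m * q m x (n + 1) + q m x n

/-- L_N(x): the largest of the first N digits. -/
def L (m N : ℕ) (x : ℝ) : ℕ := Finset.sup (Finset.Icc 1 N) fun n => a m n x


section Basic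
variable {m : ℕ}

lemma sqrt_gt_one (hm : 2 ≤ m) : 1 < Real.sqrt m := by
  rw [show (1:ℝ) = Real.sqrt 1 by simp]
  exact Real.sqrt_lt_sqrt (by norm_num) (by exact_mod_cast by omega)

lemma th_pos (hm : 2 ≤ m) : 0 < th m := by
  have := sqrt_gt_one hm
  rw [th]; positivity

lemma th_lt_one (hm : 2 ≤ m) : th m < 1 := by
  have h := sqrt_gt_one hm
  rw [th, div_lt_one (by linarith)]; exact h

lemma th_mul_sqrt (hm : 2 ≤ m) : th m * Real.sqrt m = 1 := by
  have h := sqrt_gt_one hm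
  rw [th]; field_simp

lemma m_mul_th (hm : 2 ≤ m) : (m : ℝ) * th m = Real.sqrt m := by
  have h := sqrt_gt_one hm
  have hs : Real.sqrt m * Real.sqrt m = (m:ℝ) := Real.mul_self_sqrt (by positivity)
  rw [th]; field_simp [hs]; rw [sq, hs]

lemma m_mul_th_sq (hm : 2 ≤ m) : (m : ℝ) * (th m * th m) = 1 := by
  rw [← mul_assoc, m_mul_th hm, mul_comm]; exact th_mul_sqrt hm

lemma one_le_m_th (hm : 2 ≤ m) : 1 ≤ (m:ℝ) * th m := by
  rw [m_mul_th hm]; exact le_of_lt (sqrt_gt_one hm)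

/-- key step: for b ≥ m, u ∈ (0,θ), y = 1/(θb+u) lies in (0,θ), has first digit b and T y = u. -/
lemma step_mem (hm : 2 ≤ m) {b : ℕ} (hb : m ≤ b) {u : ℝ} (hu : u ∈ Set.Ioo 0 (th m)) :
    1 / (th m * b + u) ∈ Set.Ioo 0 (th m) := by
  have hθ := th_pos hm
  have hbm : (m:ℝ) ≤ b := by exact_mod_cast hb
  have hden : 0 < th m * b + u := by nlinarith [hu.1]
  constructor
  · positivity
  · rw [div_lt_iff₀ hden]
    have h1 : (m:ℝ) * (th m * th m) = 1 := m_mul_th_sq hm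
    have h2 : (th m * th m) * (m:ℝ) ≤ (th m * th m) * (b:ℝ) :=
      mul_le_mul_of_nonneg_left hbm (by positivity)
    nlinarith [mul_pos hθ hu.1]

lemma step_digit (hm : 2 ≤ m) {b : ℕ} (hb : m ≤ b) {u : ℝ} (hu : u ∈ Set.Ioo 0 (th m)) :
    a m 1 (1 / (th m * b + u)) = b := by
  have hθ := th_pos hm
  have hbm : (m:ℝ) ≤ b := by exact_mod_cast hb
  have hden : 0 < th m * b + u := by nlinarith [hu.1]
  have hy : 1 / ((1 / (th m * b + u)) * th m) = (b : ℝ) + u / th m := by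
    field_simp
  have key : a m 1 (1 / (th m * b + u)) = ⌊(b:ℝ) + u / th m⌋₊ := by
    show ⌊1 / ((T m)^[1-1] (1 / (th m * b + u)) * th m)⌋₊ = _
    rw [show (1:ℕ) - 1 = 0 from rfl, Function.iterate_zero_apply, hy]
  rw [key]
  have h1 : 0 < u / th m := div_pos hu.1 hθ
  have h2 : u / th m < 1 := (div_lt_one hθ).2 hu.2
  rw [Nat.floor_eq_iff (by positivity)]
  constructor
  · push_cast; linarith
  · push_cast; linarith

lemma step_T (hm : 2 ≤ m) {b : ℕ} (hb : m ≤ b) {u : ℝ} (hu : u ∈ Set.Ioo 0 (th m)) :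
    T m (1 / (th m * b + u)) = u := by
  have hθ := th_pos hm
  have hbm : (m:ℝ) ≤ b := by exact_mod_cast hb
  have hden : 0 < th m * b + u := by nlinarith [hu.1]
  have hy0 : 1 / (th m * b + u) ≠ 0 := by positivity
  rw [T, if_neg hy0]
  have hfl : ⌊1 / ((1 / (th m * b + u)) * th m)⌋₊ = b := step_digit hm hb hu
  rw [hfl, one_div_one_div]; ring

end Basic

section Mob
variable {m : ℕ}

/-- Inverse branch composition: F w u = 1/(θb₁ + 1/(θb₂ + ⋯ + u)). -/
def F (m : ℕ) : List ℕ → ℝ → ℝ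
  | [], u => u
  | b :: w, u => 1 / (th m * b + F m w u)

/-- Möbius coefficients (A,B,C,D) with F w u = (A u + B)/(C u + D). -/
def co (m : ℕ) : List ℕ → ℝ × ℝ × ℝ × ℝ
  | [] => (1, 0, 0, 1)
  | b :: w =>
    ((co m w).2.2.1, (co m w).2.2.2,
      th m * b * (co m w).2.2.1 + (co m w).1,
      th m * b * (co m w).2.2.2 + (co m w).2.1)

lemma co_inv (hm : 2 ≤ m) (w : List ℕ) (hw : ∀ b ∈ w, m ≤ b) :
    0 ≤ (co m w).1 ∧ 0 ≤ (co m w).2.1 ∧ 0 ≤ (co m w).2.2.1 ∧ 1 ≤ (co m w).2.2.2 ∧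
      (co m w).2.2.1 ≤ (co m w).2.2.2 ∧ ((co m w).1 ≤ (co m w).2.1 ∨ w = []) := by
  induction w with
  | nil => simp [co]
  | cons b w ih =>
    have hb : (m:ℝ) ≤ b := by exact_mod_cast hw b (by simp)
    have hθ := th_pos hm
    have hmθ := one_le_m_th hm
    have hθb : 1 ≤ th m * b := by
      calc (1:ℝ) ≤ (m:ℝ) * th m := hmθ
      _ ≤ th m * b := by rw [mul_comm]; exact mul_le_mul_of_nonneg_left hb (le_of_lt hθ)
    obtain ⟨hA, hB, hC, hD, hCD, hAB⟩ := ih (fun c hc => hw c (by simp [hc]))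
    have hCD' : th m * ↑b * (co m w).2.2.1 + (co m w).1 ≤ th m * ↑b * (co m w).2.2.2 + (co m w).2.1 := by
      rcases hAB with hAB | hnil
      · nlinarith
      · subst hnil; simp [co]; nlinarith
    simp only [co]
    refine ⟨hC, by linarith, by nlinarith, by nlinarith, hCD', Or.inl hCD⟩

lemma co_det (w : List ℕ) :
    (co m w).1 * (co m w).2.2.2 - (co m w).2.1 * (co m w).2.2.1 = (-1 : ℝ) ^ w.length := by
  induction w with
  | nil => simp [co]
  | cons b w ih =>
    simp only [co, List.length_cons, pow_succ]
    ring_nf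
    ring_nf at ih
    linarith [ih]

lemma co_denom_pos (hm : 2 ≤ m) (w : List ℕ) (hw : ∀ b ∈ w, m ≤ b) {u : ℝ} (hu : 0 ≤ u) :
    0 < (co m w).2.2.1 * u + (co m w).2.2.2 := by
  obtain ⟨hA, hB, hC, hD, _, _⟩ := co_inv hm w hw
  nlinarith

lemma F_eq (hm : 2 ≤ m) (w : List ℕ) (hw : ∀ b ∈ w, m ≤ b) {u : ℝ} (hu : 0 ≤ u) :
    F m w u = ((co m w).1 * u + (co m w).2.1) / ((co m w).2.2.1 * u + (co m w).2.2.2) := by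
  induction w with
  | nil => simp [F, co]
  | cons b w ih =>
    have hw' : ∀ c ∈ w, m ≤ c := fun c hc => hw c (by simp [hc])
    obtain ⟨hA, hB, hC, hD, _, _⟩ := co_inv hm w hw'
    have hden := co_denom_pos hm w hw' hu
    have hb : (m:ℝ) ≤ b := by exact_mod_cast hw b (by simp)
    have hθ := th_pos hm
    have hm0 : (0:ℝ) < m := by exact_mod_cast (by omega : 0 < m)
    have hθb : 0 < th m * b := by nlinarith
    show 1 / (th m * b + F m w u) = _
    simp only [co]
    rw [ih hw']
    set A := (co m w).1
    set B := (co m w).2.1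
    set C := (co m w).2.2.1
    set D := (co m w).2.2.2
    have e1 : th m * ↑b + (A * u + B) / (C * u + D)
        = ((th m * ↑b * C + A) * u + (th m * ↑b * D + B)) / (C * u + D) := by
      rw [eq_div_iff (ne_of_gt hden)]; field_simp; ring
    rw [e1, one_div_div]

lemma F_sub (hm : 2 ≤ m) (w : List ℕ) (hw : ∀ b ∈ w, m ≤ b) {u v : ℝ} (hu : 0 ≤ u) (hv : 0 ≤ v) :
    F m w v - F m w u = (-1 : ℝ) ^ w.length * (v - u) /
      (((co m w).2.2.1 * u + (co m w).2.2.2) * ((co m w).2.2.1 * v + (co m w).2.2.2)) := by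
  have h1 := co_denom_pos hm w hw hu
  have h2 := co_denom_pos hm w hw hv
  rw [F_eq hm w hw hu, F_eq hm w hw hv, div_sub_div _ _ (ne_of_gt h2) (ne_of_gt h1)]
  rw [div_eq_div_iff (by positivity) (by positivity)]
  have hdet := co_det (m := m) w
  linear_combination ((v - u) * (((co m w).2.2.1 * u + (co m w).2.2.2) *
    ((co m w).2.2.1 * v + (co m w).2.2.2))) * hdet

lemma F_mem (hm : 2 ≤ m) (w : List ℕ) (hw : ∀ b ∈ w, m ≤ b) {u : ℝ}
    (hu : u ∈ Set.Ioo 0 (th m)) : F m w u ∈ Set.Ioo 0 (th m) := by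
  induction w with
  | nil => exact hu
  | cons b w ih =>
    have hw' : ∀ c ∈ w, m ≤ c := fun c hc => hw c (by simp [hc])
    exact step_mem hm (hw b (by simp)) (ih hw')

lemma a_shift (k : ℕ) (x : ℝ) : a m (k + 2) x = a m (k + 1) (T m x) := by
  show ⌊1 / ((T m)^[k+2-1] x * th m)⌋₊ = ⌊1 / ((T m)^[k+1-1] (T m x) * th m)⌋₊
  rw [show k+2-1 = k+1 from rfl, show k+1-1 = k from rfl, Function.iterate_succ_apply]

lemma F_digits (hm : 2 ≤ m) (w : List ℕ) (hw : ∀ b ∈ w, m ≤ b) {u : ℝ}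
    (hu : u ∈ Set.Ioo 0 (th m)) :
    (T m)^[w.length] (F m w u) = u ∧
      ∀ k, (hk : k < w.length) → a m (k + 1) (F m w u) = w.get ⟨k, hk⟩ := by
  induction w with
  | nil => exact ⟨rfl, fun k hk => absurd hk (by simp)⟩
  | cons b w ih =>
    have hw' : ∀ c ∈ w, m ≤ c := fun c hc => hw c (by simp [hc])
    have hb : m ≤ b := hw b (by simp)
    have hF : F m w u ∈ Set.Ioo 0 (th m) := F_mem hm w hw' hu
    obtain ⟨hT, hd⟩ := ih hw'
    have hTy : T m (F m (b :: w) u) = F m w u := step_T hm hb hF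
    constructor
    · rw [List.length_cons, Function.iterate_succ_apply, hTy, hT]
    · intro k hk
      match k with
      | 0 => exact step_digit hm hb hF
      | k + 1 =>
        rw [a_shift, hTy]
        exact hd k (by simpa using hk)

/-- the digit word of length n. -/
def word (m n : ℕ) (x : ℝ) : List ℕ := (List.range n).map fun k => a m (k + 1) x

@[simp] lemma word_length (n : ℕ) (x : ℝ) : (word m n x).length = n := by simp [word]

lemma word_succ (n : ℕ) (x : ℝ) : word m (n + 1) x = a m 1 x :: word m n (T m x) := by
  simp only [word, List.range_succ_eq_map, List.map_cons, List.map_map]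
  rfl

lemma word_entries (hm : 2 ≤ m) (n : ℕ) {x : ℝ}
    (hx : ∀ k, (T m)^[k] x ∈ Set.Ioo 0 (th m)) : ∀ b ∈ word m n x, m ≤ b := by
  intro b hb
  rw [word, List.mem_map] at hb
  obtain ⟨k, _, rfl⟩ := hb
  show m ≤ ⌊1 / ((T m)^[k+1-1] x * th m)⌋₊
  simp only [Nat.add_sub_cancel]
  have hxx := hx k
  have hθ := th_pos hm
  have h0 : 0 < (T m)^[k] x * th m := mul_pos hxx.1 hθ
  rw [Nat.le_floor_iff (le_of_lt (by positivity))]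
  rw [le_div_iff₀ h0]
  have h1 : (m:ℝ) * ((T m)^[k] x * th m) < (m:ℝ) * (th m * th m) := by
    have : (0:ℝ) < m := by positivity
    apply mul_lt_mul_of_pos_left _ this
    exact mul_lt_mul_of_pos_right hxx.2 hθ
  rw [m_mul_th_sq hm] at h1
  linarith

lemma F_word (hm : 2 ≤ m) (n : ℕ) {x : ℝ}
    (hx : ∀ k, (T m)^[k] x ∈ Set.Ioo 0 (th m)) :
    F m (word m n x) ((T m)^[n] x) = x := by
  induction n generalizing x with
  | zero => rfl
  | succ n ih =>
    rw [word_succ, Function.iterate_succ_apply]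
    have hTx : ∀ k, (T m)^[k] (T m x) ∈ Set.Ioo 0 (th m) := by
      intro k; rw [← Function.iterate_succ_apply]; exact hx (k+1)
    show 1 / (th m * a m 1 x + F m (word m n (T m x)) ((T m)^[n] (T m x))) = x
    rw [ih hTx]
    have hx0 := hx 0
    simp only [Function.iterate_zero_apply] at hx0
    have hxne : x ≠ 0 := ne_of_gt hx0.1
    have hTdef : T m x = 1 / x - th m * a m 1 x := by
      rw [T, if_neg hxne]; rfl
    rw [hTdef]
    have : th m * a m 1 x + (1 / x - th m * a m 1 x) = 1 / x := by ring
    rw [this, one_div_one_div]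

end Mob

section Cyl
variable {m : ℕ}

/-- the cylinder set of a word. -/
def cyl (m : ℕ) (w : List ℕ) : Set ℝ := F m w '' Set.Ioo 0 (th m)

lemma F_contOn (hm : 2 ≤ m) (w : List ℕ) (hw : ∀ b ∈ w, m ≤ b) :
    ContinuousOn (F m w) (Set.Icc 0 (th m)) := by
  have h : ContinuousOn (fun u : ℝ => ((co m w).1 * u + (co m w).2.1) /
      ((co m w).2.2.1 * u + (co m w).2.2.2)) (Set.Icc 0 (th m)) := by
    apply ContinuousOn.div
    · fun_prop
    · fun_prop
    · intro u hu
      exact ne_of_gt (co_denom_pos hm w hw hu.1)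
  exact h.congr fun u hu => F_eq hm w hw hu.1

lemma F_lt_F (hm : 2 ≤ m) (w : List ℕ) (hw : ∀ b ∈ w, m ≤ b) {u v : ℝ}
    (hu : 0 ≤ u) (huv : u < v) :
    (Even w.length → F m w u < F m w v) ∧ (Odd w.length → F m w v < F m w u) := by
  have hv : (0:ℝ) ≤ v := by linarith
  have hs := F_sub hm w hw hu hv
  have hP : 0 < ((co m w).2.2.1 * u + (co m w).2.2.2) * ((co m w).2.2.1 * v + (co m w).2.2.2) :=
    mul_pos (co_denom_pos hm w hw hu) (co_denom_pos hm w hw hv)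
  constructor
  · intro he
    rw [he.neg_one_pow] at hs
    have : 0 < F m w v - F m w u := by
      rw [hs, one_mul]; exact div_pos (by linarith) hP
    linarith
  · intro ho
    rw [ho.neg_one_pow] at hs
    have h2 : 0 < (v - u) / (((co m w).2.2.1 * u + (co m w).2.2.2) *
        ((co m w).2.2.1 * v + (co m w).2.2.2)) := div_pos (by linarith) hP
    rw [neg_one_mul, neg_div] at hs
    linarith [hs, h2]

lemma image_Ioo (hm : 2 ≤ m) (w : List ℕ) (hw : ∀ b ∈ w, m ≤ b) {γ δ : ℝ}
    (h0 : 0 ≤ γ) (hγδ : γ < δ) (hδ : δ ≤ th m) :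
    ∃ s t : ℝ, F m w '' Set.Ioo γ δ = Set.Ioo s t ∧
      t - s = (δ - γ) / (((co m w).2.2.1 * γ + (co m w).2.2.2) *
        ((co m w).2.2.1 * δ + (co m w).2.2.2)) := by
  have hcont : ContinuousOn (F m w) (Set.Icc γ δ) :=
    (F_contOn hm w hw).mono (Set.Icc_subset_Icc h0 hδ)
  have hsub := F_sub hm w hw (u := γ) (v := δ) h0 (by linarith)
  rcases Nat.even_or_odd w.length with he | ho
  · refine ⟨F m w γ, F m w δ, ?_, ?_⟩
    · apply Set.Subset.antisymm
      · rintro y ⟨u, hu, rfl⟩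
        exact ⟨(F_lt_F hm w hw h0 hu.1).1 he,
          (F_lt_F hm w hw (by linarith [hu.1]) hu.2).1 he⟩
      · exact (intermediate_value_Ioo (le_of_lt hγδ) hcont)
    · rw [he.neg_one_pow] at hsub; linear_combination hsub
  · refine ⟨F m w δ, F m w γ, ?_, ?_⟩
    · apply Set.Subset.antisymm
      · rintro y ⟨u, hu, rfl⟩
        exact ⟨(F_lt_F hm w hw (by linarith [hu.1]) hu.2).2 ho,
          (F_lt_F hm w hw h0 hu.1).2 ho⟩
      · exact (intermediate_value_Ioo' (le_of_lt hγδ) hcont)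
    · rw [ho.neg_one_pow] at hsub; linear_combination (-1 : ℝ) * hsub

lemma vol_image_Ioo (hm : 2 ≤ m) (w : List ℕ) (hw : ∀ b ∈ w, m ≤ b) {γ δ : ℝ}
    (h0 : 0 ≤ γ) (hγδ : γ < δ) (hδ : δ ≤ th m) :
    volume (F m w '' Set.Ioo γ δ) = ENNReal.ofReal ((δ - γ) /
      (((co m w).2.2.1 * γ + (co m w).2.2.2) * ((co m w).2.2.1 * δ + (co m w).2.2.2))) := by
  obtain ⟨s, t, hst, hlen⟩ := image_Ioo hm w hw h0 hγδ hδ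
  rw [hst, Real.volume_Ioo, hlen]

lemma measurableSet_image_Ioo (hm : 2 ≤ m) (w : List ℕ) (hw : ∀ b ∈ w, m ≤ b) {γ δ : ℝ}
    (h0 : 0 ≤ γ) (hγδ : γ < δ) (hδ : δ ≤ th m) :
    MeasurableSet (F m w '' Set.Ioo γ δ) := by
  obtain ⟨s, t, hst, -⟩ := image_Ioo hm w hw h0 hγδ hδ
  rw [hst]; exact measurableSet_Ioo

lemma vol_cyl (hm : 2 ≤ m) (w : List ℕ) (hw : ∀ b ∈ w, m ≤ b) :
    volume (cyl m w) = ENNReal.ofReal (th m /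
      ((co m w).2.2.2 * ((co m w).2.2.1 * th m + (co m w).2.2.2))) := by
  have := vol_image_Ioo hm w hw (γ := 0) (δ := th m) le_rfl (th_pos hm) le_rfl
  rw [cyl, this]
  norm_num

/-- lower bound: the part of a cylinder with next point in (0,δ) has relative measure ≥ δ/θ. -/
lemma sub_ratio_lower (hm : 2 ≤ m) (w : List ℕ) (hw : ∀ b ∈ w, m ≤ b) {δ : ℝ}
    (h1 : 0 < δ) (h2 : δ ≤ th m) :
    ENNReal.ofReal (δ / th m) * volume (cyl m w) ≤ volume (F m w '' Set.Ioo 0 δ) := by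
  obtain ⟨hA, hB, hC, hD, hCD, -⟩ := co_inv hm w hw
  have hθ := th_pos hm
  rw [vol_cyl hm w hw, vol_image_Ioo hm w hw le_rfl h1 h2, ← ENNReal.ofReal_mul (by positivity)]
  apply ENNReal.ofReal_le_ofReal
  norm_num
  rw [div_mul_div_comm, div_le_div_iff₀ (by positivity) (by positivity)]
  have key : (co m w).2.2.1 * δ + (co m w).2.2.2 ≤ (co m w).2.2.1 * th m + (co m w).2.2.2 := by
    nlinarith
  have hfac : 0 ≤ δ * th m * (co m w).2.2.2 := by positivity
  nlinarith [mul_le_mul_of_nonneg_left key hfac]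

/-- upper bound: relative measure ≤ 2δ/θ. -/
lemma sub_ratio_upper (hm : 2 ≤ m) (w : List ℕ) (hw : ∀ b ∈ w, m ≤ b) {δ : ℝ}
    (h1 : 0 < δ) (h2 : δ ≤ th m) :
    volume (F m w '' Set.Ioo 0 δ) ≤ ENNReal.ofReal (2 * δ / th m) * volume (cyl m w) := by
  obtain ⟨hA, hB, hC, hD, hCD, -⟩ := co_inv hm w hw
  have hθ := th_pos hm
  have hθ1 := th_lt_one hm
  rw [vol_cyl hm w hw, vol_image_Ioo hm w hw le_rfl h1 h2, ← ENNReal.ofReal_mul (by positivity)]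
  apply ENNReal.ofReal_le_ofReal
  norm_num
  rw [div_mul_div_comm, div_le_div_iff₀ (by positivity) (by positivity)]
  have key : (co m w).2.2.1 * th m + (co m w).2.2.2 ≤
      2 * ((co m w).2.2.1 * δ + (co m w).2.2.2) := by
    nlinarith
  have hfac : 0 ≤ δ * th m * (co m w).2.2.2 := by positivity
  nlinarith [mul_le_mul_of_nonneg_left key hfac]

lemma cyl_subset (hm : 2 ≤ m) (w : List ℕ) (hw : ∀ b ∈ w, m ≤ b) :
    cyl m w ⊆ Set.Ioo 0 (th m) := by
  rintro y ⟨u, hu, rfl⟩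
  exact F_mem hm w hw hu

lemma word_of_mem_cyl (hm : 2 ≤ m) (w : List ℕ) (hw : ∀ b ∈ w, m ≤ b) {x : ℝ}
    (hx : x ∈ cyl m w) : word m w.length x = w := by
  obtain ⟨u, hu, rfl⟩ := hx
  obtain ⟨-, hd⟩ := F_digits hm w hw hu
  apply List.ext_get (by simp)
  intro k h1 h2
  simp only [word, List.get_eq_getElem, List.getElem_map, List.getElem_range]
  have := hd k (by simpa using h2)
  simpa using this

lemma cyl_disjoint (hm : 2 ≤ m) {w w' : List ℕ} (hw : ∀ b ∈ w, m ≤ b) (hw' : ∀ b ∈ w', m ≤ b)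
    (hlen : w.length = w'.length) (hne : w ≠ w') : cyl m w ∩ cyl m w' = ∅ := by
  by_contra h
  obtain ⟨x, hx1, hx2⟩ := Set.nonempty_iff_ne_empty.2 h
  have e1 := word_of_mem_cyl hm w hw hx1
  have e2 := word_of_mem_cyl hm w' hw' hx2
  rw [hlen] at e1
  exact hne (e1.symm.trans e2)

end Cyl

section Good
variable {m : ℕ}

/-- the good set: all iterates stay in (0,θ). -/
def good (m : ℕ) : Set ℝ := {x | ∀ k, (T m)^[k] x ∈ Set.Ioo 0 (th m)}

lemma good_subset : good m ⊆ Set.Ioo 0 (th m) := fun x hx => by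
  have := hx 0; simpa using this

lemma T_mem_Ico (hm : 2 ≤ m) {x : ℝ} (hx : x ∈ Set.Ioo 0 (th m)) :
    T m x ∈ Set.Ico 0 (th m) := by
  have hθ := th_pos hm
  have hx0 : x ≠ 0 := ne_of_gt hx.1
  rw [T, if_neg hx0]
  have hpos : 0 < 1 / (x * th m) := div_pos one_pos (mul_pos hx.1 hθ)
  constructor
  · have h1 : (⌊1 / (x * th m)⌋₊ : ℝ) ≤ 1 / (x * th m) := Nat.floor_le (le_of_lt hpos)
    have h2 : th m * (⌊1 / (x * th m)⌋₊ : ℝ) ≤ th m * (1 / (x * th m)) :=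
      mul_le_mul_of_nonneg_left h1 (le_of_lt hθ)
    have h3 : th m * (1 / (x * th m)) = 1 / x := by field_simp
    linarith [h2, h3]
  · have h1 : 1 / (x * th m) < ⌊1 / (x * th m)⌋₊ + 1 := Nat.lt_floor_add_one _
    have h2 : th m * (1 / (x * th m)) < th m * (⌊1 / (x * th m)⌋₊ + 1) :=
      mul_lt_mul_of_pos_left h1 hθ
    have h3 : th m * (1 / (x * th m)) = 1 / x := by field_simp
    nlinarith [h2, h3]

lemma x_eq_inv (hm : 2 ≤ m) {x : ℝ} (hx : x ∈ Set.Ioo 0 (th m)) :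
    x = 1 / (th m * a m 1 x + T m x) := by
  have hx0 : x ≠ 0 := ne_of_gt hx.1
  have hTdef : T m x = 1 / x - th m * a m 1 x := by rw [T, if_neg hx0]; rfl
  rw [hTdef, show th m * ↑(a m 1 x) + (1 / x - th m * ↑(a m 1 x)) = 1 / x by ring,
    one_div_one_div]

lemma escape_eq (hm : 2 ≤ m) (n : ℕ) :
    ∀ x ∈ Set.Ioo 0 (th m), (T m)^[n] x ∉ Set.Ioo 0 (th m) →
      ∃ w : List ℕ, x = F m w 0 := by
  induction n with
  | zero => exact fun x hx h => absurd hx h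
  | succ n ih =>
    intro x hx h
    rw [Function.iterate_succ_apply] at h
    by_cases hT : T m x ∈ Set.Ioo 0 (th m)
    · obtain ⟨w, hw⟩ := ih (T m x) hT h
      refine ⟨a m 1 x :: w, ?_⟩
      show x = 1 / (th m * a m 1 x + F m w 0)
      rw [← hw]; exact x_eq_inv hm hx
    · have hIco := T_mem_Ico hm hx
      have hT0 : T m x = 0 := by
        rcases eq_or_lt_of_le hIco.1 with h0 | h0
        · exact h0.symm
        · exact absurd ⟨h0, hIco.2⟩ hT
      refine ⟨[a m 1 x], ?_⟩
      show x = 1 / (th m * a m 1 x + F m [] 0)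
      show x = 1 / (th m * a m 1 x + 0)
      rw [← hT0]; exact x_eq_inv hm hx

lemma bad_countable (hm : 2 ≤ m) : Set.Countable (Set.Ioo 0 (th m) \ good m) := by
  apply Set.Countable.mono _ (Set.countable_range fun w : List ℕ => F m w 0)
  rintro x ⟨hx, hbad⟩
  simp only [good, Set.mem_setOf_eq, not_forall] at hbad
  obtain ⟨n, hn⟩ := hbad
  obtain ⟨w, hw⟩ := escape_eq hm n x hx hn
  exact ⟨w, hw.symm⟩

lemma vol_bad (hm : 2 ≤ m) : volume (Set.Ioo 0 (th m) \ good m) = 0 :=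
  Set.Countable.measure_zero (bad_countable hm) _

lemma vol_inter_good (hm : 2 ≤ m) {s : Set ℝ} (hs : s ⊆ Set.Ioo 0 (th m)) :
    volume (s ∩ good m) = volume s := by
  have : s ∩ good m = s \ (Set.Ioo 0 (th m) \ good m) := by
    ext x
    constructor
    · rintro ⟨h1, h2⟩; exact ⟨h1, fun h => h.2 h2⟩
    · rintro ⟨h1, h2⟩
      refine ⟨h1, ?_⟩
      by_contra hg
      exact h2 ⟨hs h1, hg⟩
  rw [this, measure_diff_null (vol_bad hm)]

lemma measurable_T : Measurable (T m) := by
  have h1 : Measurable fun x : ℝ => 1 / x - th m * (⌊1 / (x * th m)⌋₊ : ℝ) := by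
    apply Measurable.sub
    · exact measurable_const.div measurable_id
    · apply Measurable.const_mul
      exact measurable_from_top.comp (Nat.measurable_floor.comp
        (measurable_const.div (measurable_id.mul_const _)))
  unfold T
  exact Measurable.ite (measurableSet_eq) measurable_const h1

end Good

section Core
variable {m : ℕ}

lemma digit_of_mem_cyl (hm : 2 ≤ m) {w : List ℕ} (hw : ∀ b ∈ w, m ≤ b) {x y : ℝ}
    (hx : x ∈ cyl m w) (hy : y ∈ cyl m w) {k : ℕ} (hk : k < w.length) :
    a m (k + 1) x = a m (k + 1) y := by
  obtain ⟨u, hu, rfl⟩ := hx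
  obtain ⟨v, hv, rfl⟩ := hy
  rw [(F_digits hm w hw hu).2 k hk, (F_digits hm w hw hv).2 k hk]

lemma a_iter_eq (M : ℕ) (x : ℝ) : a m (M + 1) x = ⌊1 / ((T m)^[M] x * th m)⌋₊ := rfl

lemma mem_image_delta (hm : 2 ≤ m) {w : List ℕ} (hw : ∀ b ∈ w, m ≤ b) {u : ℝ}
    (hu : u ∈ Set.Ioo 0 (th m)) {t : ℕ} (ht : 1 ≤ t)
    (hut : u < 1 / (t * th m)) : (t:ℕ) ≤ a m (w.length + 1) (F m w u) := by
  have hθ := th_pos hm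
  have ht' : (0:ℝ) < t := by exact_mod_cast ht
  have hT : (T m)^[w.length] (F m w u) = u := (F_digits hm w hw hu).1
  rw [a_iter_eq, hT]
  rw [Nat.le_floor_iff (le_of_lt (div_pos one_pos (mul_pos hu.1 hθ)))]
  rw [le_div_iff₀ (mul_pos hu.1 hθ)]
  rw [lt_div_iff₀ (mul_pos ht' hθ)] at hut
  nlinarith

/-- Any good point with (M+1)-st digit ≥ t lies in the image of (0,δ] in its cylinder. -/
lemma cover_lemma (hm : 2 ≤ m) {M t : ℕ} (ht : 1 ≤ t) {x : ℝ} (hg : x ∈ good m)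
    (hax : t ≤ a m (M + 1) x) :
    word m M x ∈ {w : List ℕ | w.length = M ∧ ∀ b ∈ w, m ≤ b} ∧
    ∃ u, u ∈ Set.Ioo 0 (th m) ∧ u ≤ min (th m) (1 / (t * th m)) ∧ F m (word m M x) u = x := by
  have hθ := th_pos hm
  have ht' : (0:ℝ) < t := by exact_mod_cast ht
  have hu : (T m)^[M] x ∈ Set.Ioo 0 (th m) := hg M
  refine ⟨⟨word_length M x, word_entries hm M hg⟩, (T m)^[M] x, hu, ?_, F_word hm M hg⟩
  have hflo : (t:ℝ) ≤ ⌊1 / ((T m)^[M] x * th m)⌋₊ := by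
    rw [a_iter_eq] at hax; exact_mod_cast hax
  have h1 : (t:ℝ) ≤ 1 / ((T m)^[M] x * th m) :=
    le_trans hflo (Nat.floor_le (le_of_lt (div_pos one_pos (mul_pos hu.1 hθ))))
  rw [le_div_iff₀ (mul_pos hu.1 hθ)] at h1
  have h2 : (T m)^[M] x ≤ 1 / (t * th m) := by
    rw [le_div_iff₀ (mul_pos ht' hθ)]
    nlinarith
  exact le_min (le_of_lt hu.2) h2

lemma vol_union_cyl_le (hm : 2 ≤ m) (W : Set (List ℕ)) (hW : ∀ w ∈ W, ∀ b ∈ w, m ≤ b) :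
    volume (⋃ w ∈ W, cyl m w) ≤ ENNReal.ofReal (th m) := by
  have : (⋃ w ∈ W, cyl m w) ⊆ Set.Ioo 0 (th m) := by
    simp only [Set.iUnion_subset_iff]
    exact fun w hw => cyl_subset hm w (hW w hw)
  refine le_trans (measure_mono this) ?_
  rw [Real.volume_Ioo, sub_zero]

lemma pairwise_disjoint_cyl (hm : 2 ≤ m) {M : ℕ} {W : Set (List ℕ)}
    (hWl : ∀ w ∈ W, w.length = M) (hW : ∀ w ∈ W, ∀ b ∈ w, m ≤ b) :
    W.PairwiseDisjoint (cyl m) := by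
  intro w hw w' hw' hne
  rw [Function.onFun, Set.disjoint_iff_inter_eq_empty]
  exact cyl_disjoint hm (hW w hw) (hW w' hw') ((hWl w hw).trans (hWl w' hw').symm) hne

lemma measurableSet_cyl (hm : 2 ≤ m) {w : List ℕ} (hw : ∀ b ∈ w, m ≤ b) :
    MeasurableSet (cyl m w) :=
  measurableSet_image_Ioo hm w hw le_rfl (th_pos hm) le_rfl

/-- Part A key estimate. -/
lemma volA (hm : 2 ≤ m) (M t : ℕ) (ht : 1 ≤ t) :
    volume {x | x ∈ good m ∧ t ≤ a m (M + 1) x} ≤ ENNReal.ofReal (2 / (t * th m)) := by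
  have hθ := th_pos hm
  have ht' : (0:ℝ) < t := by exact_mod_cast ht
  set δ := min (th m) (1 / (t * th m)) with hδdef
  have hδpos : 0 < δ := lt_min hθ (by positivity)
  have hδθ : δ ≤ th m := min_le_left _ _
  have hδt : δ ≤ 1 / (t * th m) := min_le_right _ _
  set W := {w : List ℕ | w.length = M ∧ ∀ b ∈ w, m ≤ b} with hWdef
  have hWl : ∀ w ∈ W, (w:List ℕ).length = M := fun w hw => hw.1
  have hWe : ∀ w ∈ W, ∀ b ∈ w, m ≤ b := fun w hw => hw.2
  have hcov : {x | x ∈ good m ∧ t ≤ a m (M + 1) x} ⊆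
      (⋃ w ∈ W, F m w '' Set.Ioo 0 δ) ∪ (⋃ w ∈ W, ({F m w δ} : Set ℝ)) := by
    rintro x ⟨hg, hax⟩
    obtain ⟨hWmem, u, hu, huδ, hFu⟩ := cover_lemma hm ht hg hax
    rcases lt_or_eq_of_le huδ with hlt | heq
    · left
      exact Set.mem_biUnion hWmem ⟨u, ⟨hu.1, hlt⟩, hFu⟩
    · right
      have hx2 : F m (word m M x) δ = x := by rw [hδdef, ← heq]; exact hFu
      exact Set.mem_biUnion hWmem (Set.mem_singleton_iff.2 hx2.symm)
  refine le_trans (measure_mono hcov) (le_trans (measure_union_le _ _) ?_)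
  have hz : volume (⋃ w ∈ W, ({F m w δ} : Set ℝ)) = 0 :=
    Set.Countable.measure_zero
      (Set.Countable.biUnion (Set.to_countable W) fun w _ => Set.countable_singleton _) _
  rw [hz, add_zero]
  refine le_trans (measure_biUnion_le volume (Set.to_countable W) _) ?_
  have hle : ∀ w : W, volume (F m (w:List ℕ) '' Set.Ioo 0 δ)
      ≤ ENNReal.ofReal (2 * δ / th m) * volume (cyl m (w:List ℕ)) :=
    fun w => sub_ratio_upper hm w (hWe w w.2) hδpos hδθ
  calc ∑' w : W, volume (F m (w:List ℕ) '' Set.Ioo 0 δ)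
      ≤ ∑' w : W, ENNReal.ofReal (2 * δ / th m) * volume (cyl m (w:List ℕ)) :=
        ENNReal.tsum_le_tsum hle
    _ = ENNReal.ofReal (2 * δ / th m) * ∑' w : W, volume (cyl m (w:List ℕ)) :=
        ENNReal.tsum_mul_left
    _ = ENNReal.ofReal (2 * δ / th m) * volume (⋃ w ∈ W, cyl m w) := by
        rw [measure_biUnion (Set.to_countable W) (pairwise_disjoint_cyl hm hWl hWe)
          (fun w hw => measurableSet_cyl hm (hWe w hw))]
    _ ≤ ENNReal.ofReal (2 * δ / th m) * ENNReal.ofReal (th m) :=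
        mul_le_mul_right (vol_union_cyl_le hm W hWe) _
    _ = ENNReal.ofReal (2 * δ) := by
        rw [← ENNReal.ofReal_mul (by positivity)]
        congr 1
        field_simp
    _ ≤ ENNReal.ofReal (2 / (t * th m)) := by
        apply ENNReal.ofReal_le_ofReal
        calc 2 * δ ≤ 2 * (1 / (t * th m)) := by linarith
          _ = 2 / (t * th m) := by ring

end Core

section PartB
variable {m : ℕ}

/-- digit-constrained sets. -/
def Dset (m : ℕ) (c : ℕ → ℕ) (N M : ℕ) : Set ℝ :=
  {x | x ∈ Set.Ioo 0 (th m) ∧ ∀ n, N ≤ n → n ≤ M → a m n x < c n}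

lemma Dset_subset (c : ℕ → ℕ) (N M : ℕ) : Dset m c N M ⊆ Set.Ioo 0 (th m) :=
  fun _ hx => hx.1

lemma theta_min_eq (hm : 2 ≤ m) {t : ℕ} (ht : 1 ≤ t) :
    th m * ((m:ℝ) / t) = 1 / (t * th m) := by
  have hθ := th_pos hm
  have ht' : (0:ℝ) < t := by exact_mod_cast ht
  have h := m_mul_th_sq hm
  field_simp
  nlinarith [h]

lemma volB (hm : 2 ≤ m) (c : ℕ → ℕ) (hc : ∀ n, 1 ≤ c n) (N : ℕ) (hN : 1 ≤ N) :
    ∀ M, volume (Dset m c N M) ≤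
      ENNReal.ofReal (th m * ∏ n ∈ Finset.Icc N M, (1 - min 1 ((m:ℝ) / c n))) := by
  have hθ := th_pos hm
  have hbase : ∀ M, volume (Dset m c N M) ≤ ENNReal.ofReal (th m) := by
    intro M
    refine le_trans (measure_mono (Dset_subset c N M)) ?_
    rw [Real.volume_Ioo, sub_zero]
  intro M
  induction M with
  | zero =>
    rw [Finset.Icc_eq_empty (by omega), Finset.prod_empty, mul_one]
    exact hbase 0
  | succ M ih =>
    by_cases hNM : N ≤ M + 1
    case neg =>
      rw [Finset.Icc_eq_empty (by omega), Finset.prod_empty, mul_one]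
      exact hbase (M + 1)
    case pos =>
    set t := c (M + 1) with htdef
    have ht : 1 ≤ t := hc (M + 1)
    have ht' : (0:ℝ) < t := by exact_mod_cast ht
    set rr := min 1 ((m:ℝ) / t) with hrrdef
    have hrr0 : 0 < rr := lt_min one_pos (by positivity)
    have hrr1 : rr ≤ 1 := min_le_left _ _
    set δ := th m * rr with hδdef
    have hδpos : 0 < δ := mul_pos hθ hrr0
    have hδθ : δ ≤ th m := by nlinarith
    have hδt : δ ≤ 1 / (t * th m) := by
      rw [← theta_min_eq hm ht]
      have : rr ≤ (m:ℝ) / t := min_le_right _ _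
      nlinarith
    have hδr : δ / th m = rr := by
      rw [hδdef, mul_comm, mul_div_assoc, div_self (ne_of_gt hθ), mul_one]
    set W := word m M '' (Dset m c N M ∩ good m) with hWdef
    have hWl : ∀ w ∈ W, (w : List ℕ).length = M := by
      rintro w ⟨x, -, rfl⟩; exact word_length M x
    have hWe : ∀ w ∈ W, ∀ b ∈ w, m ≤ b := by
      rintro w ⟨x, hx, rfl⟩; exact word_entries hm M hx.2
    -- every w ∈ W, the image F w '' Ioo 0 δ sits inside Dset N M with big (M+1)st digit
    have hBsub : ∀ w ∈ W, F m w '' Set.Ioo 0 δ ⊆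
        Dset m c N M ∩ {y | t ≤ a m (M + 1) y} := by
      rintro w ⟨x₀, ⟨hx₀D, hx₀g⟩, rfl⟩ y ⟨u, hu, rfl⟩
      have hw : ∀ b ∈ word m M x₀, m ≤ b := word_entries hm M hx₀g
      have huθ : u ∈ Set.Ioo 0 (th m) := ⟨hu.1, lt_of_lt_of_le hu.2 hδθ⟩
      have hx₀cyl : x₀ ∈ cyl m (word m M x₀) :=
        ⟨(T m)^[M] x₀, hx₀g M, F_word hm M hx₀g⟩
      have hycyl : F m (word m M x₀) u ∈ cyl m (word m M x₀) := ⟨u, huθ, rfl⟩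
      refine ⟨⟨F_mem hm _ hw huθ, ?_⟩, ?_⟩
      · intro n hn1 hn2
        obtain ⟨k, rfl⟩ : ∃ k, n = k + 1 := ⟨n - 1, by omega⟩
        have hk : k < (word m M x₀).length := by rw [word_length]; omega
        rw [digit_of_mem_cyl hm hw hycyl hx₀cyl hk]
        exact hx₀D.2 (k + 1) hn1 hn2
      · have := mem_image_delta hm hw huθ ht (lt_of_lt_of_le hu.2 hδt)
        rwa [word_length] at this
    -- A and B
    set A := Dset m c N (M + 1) ∩ good m with hAdef
    set B := ⋃ w ∈ W, F m w '' Set.Ioo 0 δ with hBdef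
    have hvolA' : volume (Dset m c N (M + 1)) = volume A :=
      (vol_inter_good hm (Dset_subset c N (M + 1))).symm
    have hvolDM : volume (Dset m c N M) = volume (Dset m c N M ∩ good m) :=
      (vol_inter_good hm (Dset_subset c N M)).symm
    have hAB : Disjoint A B := by
      rw [Set.disjoint_left]
      rintro y ⟨hyD, -⟩ hyB
      simp only [hBdef, Set.mem_iUnion] at hyB
      obtain ⟨w, hwW, hyw⟩ := hyB
      have := (hBsub w hwW hyw).2
      have h2 := hyD.2 (M + 1) hNM le_rfl
      exact absurd h2 (not_lt.2 this)
    have hBmeas : MeasurableSet B := by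
      apply MeasurableSet.biUnion (Set.to_countable W)
      intro w hw
      exact measurableSet_image_Ioo hm w (hWe w hw) le_rfl hδpos hδθ
    have hABsub : A ∪ B ⊆ Dset m c N M := by
      rintro y (⟨hy, -⟩ | hy)
      · exact ⟨hy.1, fun n h1 h2 => hy.2 n h1 (by omega)⟩
      · simp only [hBdef, Set.mem_iUnion] at hy
        obtain ⟨w, hwW, hyw⟩ := hy
        exact (hBsub w hwW hyw).1
    have hcover : Dset m c N M ∩ good m ⊆ ⋃ w ∈ W, cyl m w := by
      rintro x hx
      exact Set.mem_biUnion (Set.mem_image_of_mem _ hx)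
        ⟨(T m)^[M] x, hx.2 M, F_word hm M hx.2⟩
    have hBvol : ENNReal.ofReal rr * volume (Dset m c N M) ≤ volume B := by
      have hdisjB : W.PairwiseDisjoint fun w => F m w '' Set.Ioo 0 δ := by
        apply Set.PairwiseDisjoint.mono (pairwise_disjoint_cyl hm hWl hWe)
        intro w
        exact Set.image_mono (Set.Ioo_subset_Ioo le_rfl hδθ)
      rw [hBdef, measure_biUnion (Set.to_countable W) hdisjB
        (fun w hw => measurableSet_image_Ioo hm w (hWe w hw) le_rfl hδpos hδθ)]
      calc ENNReal.ofReal rr * volume (Dset m c N M)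
          = ENNReal.ofReal (δ / th m) * volume (Dset m c N M) := by rw [hδr]
        _ ≤ ENNReal.ofReal (δ / th m) * volume (⋃ w ∈ W, cyl m w) := by
            rw [hvolDM]; exact mul_le_mul_right (measure_mono hcover) _
        _ = ENNReal.ofReal (δ / th m) * ∑' w : W, volume (cyl m (w : List ℕ)) := by
            rw [measure_biUnion (Set.to_countable W) (pairwise_disjoint_cyl hm hWl hWe)
              (fun w hw => measurableSet_cyl hm (hWe w hw))]
        _ = ∑' w : W, ENNReal.ofReal (δ / th m) * volume (cyl m (w : List ℕ)) :=
            ENNReal.tsum_mul_left.symm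
        _ ≤ ∑' w : W, volume (F m (w : List ℕ) '' Set.Ioo 0 δ) :=
            ENNReal.tsum_le_tsum fun w => sub_ratio_lower hm w (hWe w w.2) hδpos hδθ
    have hkey : volume (Dset m c N (M + 1)) + ENNReal.ofReal rr * volume (Dset m c N M)
        ≤ volume (Dset m c N M) := by
      calc volume (Dset m c N (M + 1)) + ENNReal.ofReal rr * volume (Dset m c N M)
          ≤ volume A + volume B := by
            rw [← hvolA']; exact add_le_add le_rfl hBvol
        _ = volume (A ∪ B) := (measure_union hAB hBmeas).symm
        _ ≤ volume (Dset m c N M) := measure_mono hABsub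
    -- cancel
    have hfin : ENNReal.ofReal rr * volume (Dset m c N M) ≠ ⊤ :=
      ne_of_lt (lt_of_le_of_lt (le_trans (mul_le_mul_right (hbase M) _)
        (le_of_eq rfl)) (by
          exact lt_of_le_of_lt le_rfl (by
            exact ENNReal.mul_lt_top ENNReal.ofReal_lt_top ENNReal.ofReal_lt_top)))
    have hsplit : volume (Dset m c N M) =
        ENNReal.ofReal (1 - rr) * volume (Dset m c N M)
          + ENNReal.ofReal rr * volume (Dset m c N M) := by
      rw [← add_mul, ← ENNReal.ofReal_add (by linarith) (le_of_lt hrr0)]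
      norm_num
    have hstep : volume (Dset m c N (M + 1)) ≤
        ENNReal.ofReal (1 - rr) * volume (Dset m c N M) :=
      (ENNReal.add_le_add_iff_right hfin).1 (le_trans hkey (le_of_eq hsplit))
    calc volume (Dset m c N (M + 1))
        ≤ ENNReal.ofReal (1 - rr) * volume (Dset m c N M) := hstep
      _ ≤ ENNReal.ofReal (1 - rr) *
          ENNReal.ofReal (th m * ∏ n ∈ Finset.Icc N M, (1 - min 1 ((m:ℝ) / c n))) :=
            mul_le_mul_right ih _
      _ = ENNReal.ofReal (th m * ∏ n ∈ Finset.Icc N (M + 1), (1 - min 1 ((m:ℝ) / c n))) := by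
          rw [← ENNReal.ofReal_mul (by linarith)]
          congr 1
          rw [Finset.prod_Icc_succ_top hNM]
          ring
  
end PartB

section Tail
variable {m : ℕ}

/-- divergence of the partial sums kills the tail sets. -/
lemma volS (hm : 2 ≤ m) (c : ℕ → ℕ) (hc : ∀ n, 1 ≤ c n) (N : ℕ) (hN : 1 ≤ N)
    (hdiv : Tendsto (fun M => ∑ n ∈ Finset.Icc N M, min 1 ((m:ℝ) / c n)) atTop atTop) :
    volume {x | x ∈ Set.Ioo 0 (th m) ∧ ∀ n, N ≤ n → a m n x < c n} = 0 := by
  have hθ := th_pos hm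
  set S := {x | x ∈ Set.Ioo 0 (th m) ∧ ∀ n, N ≤ n → a m n x < c n} with hSdef
  have hsub : ∀ M, S ⊆ Dset m c N M := fun M x hx => ⟨hx.1, fun n h1 _ => hx.2 n h1⟩
  have hprodexp : ∀ M : ℕ, ∏ n ∈ Finset.Icc N M, (1 - min 1 ((m:ℝ) / c n)) ≤
      Real.exp (-∑ n ∈ Finset.Icc N M, min 1 ((m:ℝ) / c n)) := by
    intro M
    calc ∏ n ∈ Finset.Icc N M, (1 - min 1 ((m:ℝ) / c n))
        ≤ ∏ n ∈ Finset.Icc N M, Real.exp (-(min 1 ((m:ℝ) / c n))) := by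
          apply Finset.prod_le_prod
          · intro i _
            have : min 1 ((m:ℝ) / c i) ≤ 1 := min_le_left _ _
            linarith
          · intro i _
            have := Real.add_one_le_exp (-(min 1 ((m:ℝ) / c i)))
            linarith
      _ = Real.exp (∑ n ∈ Finset.Icc N M, -(min 1 ((m:ℝ) / c n))) := (Real.exp_sum _ _).symm
      _ = Real.exp (-∑ n ∈ Finset.Icc N M, min 1 ((m:ℝ) / c n)) := by
          rw [Finset.sum_neg_distrib]
  have hb : ∀ M : ℕ, volume S ≤
      ENNReal.ofReal (th m * Real.exp (-∑ n ∈ Finset.Icc N M, min 1 ((m:ℝ) / c n))) := by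
    intro M
    refine le_trans (measure_mono (hsub M)) (le_trans (volB hm c hc N hN M) ?_)
    exact ENNReal.ofReal_le_ofReal (mul_le_mul_of_nonneg_left (hprodexp M) (le_of_lt hθ))
  have htend : Tendsto (fun M : ℕ =>
      ENNReal.ofReal (th m * Real.exp (-∑ n ∈ Finset.Icc N M, min 1 ((m:ℝ) / c n))))
      atTop (𝓝 0) := by
    have h2 : Tendsto (fun M : ℕ =>
        Real.exp (-∑ n ∈ Finset.Icc N M, min 1 ((m:ℝ) / c n))) atTop (𝓝 0) :=
      Real.tendsto_exp_atBot.comp (tendsto_neg_atTop_atBot.comp hdiv)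
    have h1 := h2.const_mul (th m)
    rw [mul_zero] at h1
    have h3 := ENNReal.tendsto_ofReal h1
    rwa [ENNReal.ofReal_zero] at h3
  exact le_antisymm (ge_of_tendsto' htend hb) zero_le

/-- comparison of ∑ min(1, m / c n) with ∑ 1/φ n for c n = max 1 ⌈t φ n⌉. -/
lemma sum_tendsto (hm : 2 ≤ m) (φ : ℕ → ℝ) (hpos : ∀ n, 1 ≤ n → 0 < φ n)
    (hmono : ∀ n k, 1 ≤ n → n ≤ k → φ n ≤ φ k)
    (hdiv : ¬ Summable fun n : ℕ => 1 / φ (n + 1)) (t : ℕ) (N : ℕ) (hN : 1 ≤ N) :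
    Tendsto (fun M => ∑ n ∈ Finset.Icc N M,
      min 1 ((m:ℝ) / ((max 1 ⌈(t:ℝ) * φ n⌉₊ : ℕ) : ℝ))) atTop atTop := by
  have hφ1 : 0 < φ 1 := hpos 1 le_rfl
  have hm0 : (0:ℝ) < m := by exact_mod_cast (by omega : 0 < m)
  set K : ℝ := (t:ℝ) + 1 / φ 1 with hKdef
  have hK : 0 < K := by positivity
  set κ : ℝ := min (φ 1) ((m:ℝ) / K) with hκdef
  have hκ : 0 < κ := lt_min hφ1 (by positivity)
  have hpt : ∀ n, 1 ≤ n → κ * (1 / φ n) ≤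
      min 1 ((m:ℝ) / ((max 1 ⌈(t:ℝ) * φ n⌉₊ : ℕ) : ℝ)) := by
    intro n hn
    have hφn : 0 < φ n := hpos n hn
    have hφn1 : φ 1 ≤ φ n := hmono 1 n le_rfl hn
    have hKφ1 : (1:ℝ) ≤ (1 / φ 1) * φ n := by
      rw [div_mul_eq_mul_div, le_div_iff₀ hφ1, one_mul, one_mul]; exact hφn1
    have hcle : ((max 1 ⌈(t:ℝ) * φ n⌉₊ : ℕ) : ℝ) ≤ K * φ n := by
      rw [Nat.cast_max]
      apply max_le
      · rw [Nat.cast_one, hKdef, add_mul]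
        nlinarith
      · have h1 : (⌈(t:ℝ) * φ n⌉₊ : ℝ) < (t:ℝ) * φ n + 1 :=
          Nat.ceil_lt_add_one (by positivity)
        rw [hKdef, add_mul]
        nlinarith
    have hcpos : (0:ℝ) < ((max 1 ⌈(t:ℝ) * φ n⌉₊ : ℕ) : ℝ) := by
      have h1 : (1:ℕ) ≤ max 1 ⌈(t:ℝ) * φ n⌉₊ := le_max_left _ _
      exact_mod_cast lt_of_lt_of_le Nat.zero_lt_one h1
    have hdivle : ((m:ℝ) / K) / φ n ≤ (m:ℝ) / ((max 1 ⌈(t:ℝ) * φ n⌉₊ : ℕ) : ℝ) := by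
      rw [div_div]
      exact div_le_div_of_nonneg_left (le_of_lt hm0) hcpos hcle
    have hmin : min 1 (((m:ℝ) / K) / φ n) ≤
        min 1 ((m:ℝ) / ((max 1 ⌈(t:ℝ) * φ n⌉₊ : ℕ) : ℝ)) := min_le_min le_rfl hdivle
    refine le_trans ?_ hmin
    rw [mul_one_div]
    apply le_min
    · rw [div_le_one hφn]
      exact le_trans (min_le_left _ _) hφn1
    · rw [div_le_div_iff_of_pos_right hφn]
      exact min_le_right _ _
  -- lower bound tendsto
  have hnn : ∀ k : ℕ, 0 ≤ 1 / φ (k + 1) := fun k => le_of_lt (one_div_pos.2 (hpos _ (by omega)))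
  have hg : Tendsto (fun M => ∑ k ∈ Finset.range M, 1 / φ (k + 1)) atTop atTop :=
    (not_summable_iff_tendsto_nat_atTop_of_nonneg hnn).1 hdiv
  have hlow : Tendsto (fun M => κ * ((∑ n ∈ Finset.range (M + 1), 1 / φ n)
      - ∑ n ∈ Finset.range N, 1 / φ n)) atTop atTop := by
    have heq : (fun M => κ * ((∑ n ∈ Finset.range (M + 1), 1 / φ n)
        - ∑ n ∈ Finset.range N, 1 / φ n)) = fun M =>
        κ * ((∑ k ∈ Finset.range M, 1 / φ (k + 1))
          + (1 / φ 0 - ∑ n ∈ Finset.range N, 1 / φ n)) := by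
      funext M
      rw [Finset.sum_range_succ']
      ring
    rw [heq]
    exact Tendsto.const_mul_atTop hκ (tendsto_atTop_add_const_right _ _ hg)
  apply tendsto_atTop_mono' atTop ?_ hlow
  filter_upwards [eventually_ge_atTop N] with M hM
  calc κ * ((∑ n ∈ Finset.range (M + 1), 1 / φ n) - ∑ n ∈ Finset.range N, 1 / φ n)
      = κ * ∑ n ∈ Finset.Icc N M, 1 / φ n := by
        rw [← Finset.Ico_add_one_right_eq_Icc, Finset.sum_Ico_eq_sub _ (by omega)]
    _ = ∑ n ∈ Finset.Icc N M, κ * (1 / φ n) := Finset.mul_sum _ _ _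
    _ ≤ ∑ n ∈ Finset.Icc N M, min 1 ((m:ℝ) / ((max 1 ⌈(t:ℝ) * φ n⌉₊ : ℕ) : ℝ)) := by
        apply Finset.sum_le_sum
        intro n hn
        exact hpt n (le_trans hN (Finset.mem_Icc.1 hn).1)

end Tail

section Final
variable {m : ℕ}

lemma volA_bc (hm : 2 ≤ m) (φ : ℕ → ℝ) (hpos : ∀ n, 1 ≤ n → 0 < φ n)
    (hsum : Summable fun n : ℕ => 1 / φ (n + 1)) (j : ℕ) (hj : 1 ≤ j) :
    volume (limsup (fun n => {x | x ∈ good m ∧ ⌈φ (n + 1) / j⌉₊ ≤ a m (n + 1) x}) atTop) = 0 := by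
  have hθ := th_pos hm
  have hj' : (0:ℝ) < j := by exact_mod_cast hj
  apply measure_limsup_atTop_eq_zero
  have hb : ∀ n : ℕ, volume {x | x ∈ good m ∧ ⌈φ (n + 1) / j⌉₊ ≤ a m (n + 1) x}
      ≤ ENNReal.ofReal ((2 * j / th m) * (1 / φ (n + 1))) := by
    intro n
    have hφn : 0 < φ (n + 1) := hpos (n + 1) (by omega)
    have htn : 1 ≤ ⌈φ (n + 1) / j⌉₊ := Nat.ceil_pos.2 (div_pos hφn hj')
    refine le_trans (volA hm n _ htn) (ENNReal.ofReal_le_ofReal ?_)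
    have h1 : φ (n + 1) / j ≤ (⌈φ (n + 1) / j⌉₊ : ℝ) := Nat.le_ceil _
    have h2 : (0:ℝ) < (⌈φ (n + 1) / j⌉₊ : ℝ) := by exact_mod_cast htn
    rw [div_le_iff₀ (mul_pos h2 hθ)] at *
    have : φ (n + 1) / j * th m ≤ (⌈φ (n + 1) / j⌉₊ : ℝ) * th m :=
      mul_le_mul_of_nonneg_right h1 (le_of_lt hθ)
    calc (2:ℝ) = (2 * j / th m * (1 / φ (n + 1))) * (φ (n + 1) / j * th m) := by
          field_simp
      _ ≤ (2 * j / th m * (1 / φ (n + 1))) * ((⌈φ (n + 1) / j⌉₊ : ℝ) * th m) := by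
          apply mul_le_mul_of_nonneg_left this
          positivity
  have hsum2 : Summable fun n : ℕ => (2 * j / th m) * (1 / φ (n + 1)) := hsum.mul_left _
  have hnn : ∀ n : ℕ, 0 ≤ (2 * j / th m) * (1 / φ (n + 1)) := by
    intro n
    have hφn : 0 < φ (n + 1) := hpos (n + 1) (by omega)
    positivity
  have hle : ∑' n, volume {x | x ∈ good m ∧ ⌈φ (n + 1) / j⌉₊ ≤ a m (n + 1) x}
      ≤ ENNReal.ofReal (∑' n, (2 * j / th m) * (1 / φ (n + 1))) :=
    le_trans (ENNReal.tsum_le_tsum hb)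
      (le_of_eq (ENNReal.ofReal_tsum_of_nonneg hnn hsum2).symm)
  exact ne_top_of_le_ne_top ENNReal.ofReal_ne_top hle

lemma phi_tendsto (φ : ℕ → ℝ) (hpos : ∀ n, 1 ≤ n → 0 < φ n)
    (hsum : Summable fun n : ℕ => 1 / φ (n + 1)) : Tendsto φ atTop atTop := by
  rw [tendsto_atTop]
  intro b
  set B := max b 1 with hBdef
  have hB : (0:ℝ) < B := lt_of_lt_of_le one_pos (le_max_right _ _)
  have hev : ∀ᶠ n in atTop, 1 / φ (n + 1) < 1 / B :=
    hsum.tendsto_atTop_zero.eventually_lt_const (by positivity)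
  obtain ⟨N, hN⟩ := eventually_atTop.1 hev
  rw [eventually_atTop]
  refine ⟨N + 1, fun n hn => ?_⟩
  obtain ⟨k, rfl⟩ : ∃ k, n = k + 1 := ⟨n - 1, by omega⟩
  have h1 := hN k (by omega)
  have hφ : 0 < φ (k + 1) := hpos (k + 1) (by omega)
  have h2 : B < φ (k + 1) := lt_of_one_div_lt_one_div hφ h1
  exact le_trans (le_max_left b 1) (le_of_lt h2)

lemma ereal_top (z : EReal) (h : ∀ t : ℕ, ((t:ℝ) : EReal) ≤ z) : z = ⊤ := by
  induction z with
  | bot =>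
    have h1 := h 1
    exact absurd (le_bot_iff.1 h1) (EReal.coe_ne_bot _)
  | coe r =>
    obtain ⟨t, ht⟩ := exists_nat_gt r
    have h2 := h t
    rw [EReal.coe_le_coe_iff] at h2
    linarith
  | top => rfl

lemma ereal_nonpos (z : EReal) (h : ∀ j : ℕ, 1 ≤ j → z ≤ ((((1:ℝ) / (j:ℝ) : ℝ)) : EReal)) :
    z ≤ 0 := by
  induction z with
  | bot => exact bot_le
  | coe r =>
    have hr : r ≤ 0 := by
      by_contra hc
      push_neg at hc
      obtain ⟨n, hn⟩ := exists_nat_one_div_lt hc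
      have h2 := h (n + 1) (by omega)
      rw [EReal.coe_le_coe_iff] at h2
      push_cast at h2 hn
      linarith
    exact EReal.coe_nonpos.2 hr
  | top =>
    have h1 := h 1 le_rfl
    exact absurd h1 (not_le.2 (EReal.coe_lt_top _))

lemma limsup_zero_pt (φ : ℕ → ℝ) (hpos : ∀ n, 1 ≤ n → 0 < φ n)
    (hmono : ∀ n k, 1 ≤ n → n ≤ k → φ n ≤ φ k) (hφtop : Tendsto φ atTop atTop) {x : ℝ}
    (hx : ∀ j : ℕ, 1 ≤ j → ∀ᶠ n in atTop, (a m (n + 1) x : ℝ) < φ (n + 1) / j) :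
    limsup (fun N : ℕ => (((L m N x : ℝ) / φ N : ℝ) : EReal)) atTop = 0 := by
  apply le_antisymm
  · apply ereal_nonpos
    intro j hj
    have hj' : (0:ℝ) < j := by exact_mod_cast hj
    obtain ⟨n₀, hn₀⟩ := eventually_atTop.1 (hx j hj)
    set n₁ := n₀ + 1 with hn₁def
    have hn₁ : ∀ k, n₁ ≤ k → (a m k x : ℝ) < φ k / j := by
      intro k hk
      obtain ⟨l, rfl⟩ : ∃ l, k = l + 1 := ⟨k - 1, by omega⟩
      exact hn₀ l (by omega)
    set K : ℝ := (L m n₁ x : ℝ) with hKdef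
    refine limsup_le_of_le (by isBoundedDefault) ?_
    filter_upwards [eventually_ge_atTop n₁, eventually_ge_atTop 1,
      hφtop.eventually_ge_atTop (j * K)] with N hNn₁ hN1 hφN
    have hφNpos : 0 < φ N := hpos N hN1
    rw [EReal.coe_le_coe_iff]
    have hLle : (L m N x : ℝ) ≤ φ N / j := by
      obtain ⟨k₀, hk₀mem, hk₀⟩ := Finset.exists_mem_eq_sup (Finset.Icc 1 N)
        (Finset.nonempty_Icc.2 hN1) (fun n => a m n x)
      rw [L, hk₀]
      obtain ⟨hk₀1, hk₀N⟩ := Finset.mem_Icc.1 hk₀mem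
      by_cases hcase : k₀ ≤ n₁
      · have h1 : a m k₀ x ≤ L m n₁ x :=
          Finset.le_sup (f := fun n => a m n x) (Finset.mem_Icc.2 ⟨hk₀1, hcase⟩)
        have h2 : (a m k₀ x : ℝ) ≤ K := by rw [hKdef]; exact_mod_cast h1
        rw [le_div_iff₀ hj']
        calc (a m k₀ x : ℝ) * j ≤ K * j := by nlinarith
          _ ≤ φ N := by rw [mul_comm]; exact hφN
      · push_neg at hcase
        have h1 := hn₁ k₀ (le_of_lt hcase)
        have h2 : φ k₀ ≤ φ N := hmono k₀ N hk₀1 hk₀N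
        have h3 : φ k₀ / j ≤ φ N / j := by gcongr
        linarith
    rw [div_le_div_iff₀ hφNpos hj']
    rw [le_div_iff₀ hj'] at hLle
    linarith
  · apply le_limsup_of_frequently_le'
    apply Filter.Eventually.frequently
    filter_upwards [eventually_ge_atTop 1] with N hN1
    have h1 : (0:ℝ) ≤ (L m N x : ℝ) / φ N :=
      div_nonneg (Nat.cast_nonneg _) (le_of_lt (hpos N hN1))
    exact_mod_cast EReal.coe_nonneg.2 h1

lemma limsup_top_pt (φ : ℕ → ℝ) (hpos : ∀ n, 1 ≤ n → 0 < φ n) {x : ℝ}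
    (hx : ∀ t : ℕ, ∃ᶠ n in atTop, 1 ≤ n ∧ (t:ℝ) * φ n ≤ (a m n x : ℝ)) :
    limsup (fun N : ℕ => (((L m N x : ℝ) / φ N : ℝ) : EReal)) atTop = ⊤ := by
  apply ereal_top
  intro t
  apply le_limsup_of_frequently_le'
  apply (hx t).mono
  rintro n ⟨hn1, hn2⟩
  rw [EReal.coe_le_coe_iff]
  have hφn := hpos n hn1
  have hL : (a m n x : ℝ) ≤ (L m n x : ℝ) := by
    exact_mod_cast Finset.le_sup (f := fun k => a m k x) (Finset.mem_Icc.2 ⟨hn1, le_rfl⟩)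
  rw [le_div_iff₀ hφn]
  linarith

end Final

theorem stmt_19_aux (m : ℕ) (hm : 2 ≤ m) (φ : ℕ → ℝ) (hpos : ∀ n, 1 ≤ n → 0 < φ n)
    (hmono : ∀ n k, 1 ≤ n → n ≤ k → φ n ≤ φ k) :
    ((Summable fun n : ℕ => 1 / φ (n + 1)) →
        ∀ᵐ x ∂(volume.restrict (Set.Ioo 0 (th m))),
          Filter.limsup (fun N : ℕ => (((L m N x : ℝ) / φ N : ℝ) : EReal)) atTop = 0) ∧
      (¬ (Summable fun n : ℕ => 1 / φ (n + 1)) →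
        ∀ᵐ x ∂(volume.restrict (Set.Ioo 0 (th m))),
          Filter.limsup (fun N : ℕ => (((L m N x : ℝ) / φ N : ℝ) : EReal)) atTop = ⊤) := by
  constructor
  · intro hsum
    have hφtop := phi_tendsto φ hpos hsum
    set Bad : Set ℝ := (Set.Ioo 0 (th m) \ good m) ∪
      ⋃ j : ℕ, limsup (fun n =>
        {x | x ∈ good m ∧ ⌈φ (n + 1) / ((j + 1 : ℕ) : ℝ)⌉₊ ≤ a m (n + 1) x}) atTop
      with hBadDef
    have hBad : volume Bad = 0 := by
      apply measure_union_null (vol_bad hm)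
      apply measure_iUnion_null
      intro j
      exact volA_bc hm φ hpos hsum (j + 1) (by omega)
    rw [ae_iff, Measure.restrict_apply' measurableSet_Ioo]
    apply measure_mono_null ?_ hBad
    intro x hx
    obtain ⟨hxP, hxIoo⟩ := hx
    by_contra hxBad
    apply hxP
    have hxg : x ∈ good m := by
      by_contra hg
      exact hxBad (Set.mem_union_left _ ⟨hxIoo, hg⟩)
    have hnotlim : ∀ j : ℕ, x ∉ limsup (fun n =>
        {x | x ∈ good m ∧ ⌈φ (n + 1) / ((j + 1 : ℕ) : ℝ)⌉₊ ≤ a m (n + 1) x}) atTop := by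
      intro j hmem
      exact hxBad (Set.mem_union_right _ (Set.mem_iUnion.2 ⟨j, hmem⟩))
    apply limsup_zero_pt φ hpos hmono hφtop
    intro j hj
    obtain ⟨i, rfl⟩ : ∃ i, j = i + 1 := ⟨j - 1, by omega⟩
    have h1 := hnotlim i
    rw [mem_limsup_iff_frequently_mem, Filter.not_frequently] at h1
    apply h1.mono
    intro n hn
    have h2 : ¬ (⌈φ (n + 1) / ((i + 1 : ℕ) : ℝ)⌉₊ ≤ a m (n + 1) x) := fun hcon => hn ⟨hxg, hcon⟩
    push_neg at h2
    rw [Nat.lt_ceil] at h2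
    exact_mod_cast h2
  · intro hdiv
    set cc : ℕ → ℕ → ℕ := fun t n => max 1 ⌈(t:ℝ) * φ n⌉₊ with hccdef
    set Bad : Set ℝ := (Set.Ioo 0 (th m) \ good m) ∪
      ⋃ t : ℕ, ⋃ N : ℕ,
        {x | x ∈ Set.Ioo 0 (th m) ∧ ∀ n, max N 1 ≤ n → a m n x < cc t n} with hBadDef
    have hBad : volume Bad = 0 := by
      apply measure_union_null (vol_bad hm)
      apply measure_iUnion_null; intro t
      apply measure_iUnion_null; intro N
      exact volS hm (cc t) (fun n => le_max_left _ _) (max N 1) (le_max_right _ _)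
        (sum_tendsto hm φ hpos hmono hdiv t (max N 1) (le_max_right _ _))
    rw [ae_iff, Measure.restrict_apply' measurableSet_Ioo]
    apply measure_mono_null ?_ hBad
    intro x hx
    obtain ⟨hxP, hxIoo⟩ := hx
    by_contra hxBad
    apply hxP
    apply limsup_top_pt φ hpos
    intro t
    by_contra hfreq
    rw [Filter.not_frequently] at hfreq
    obtain ⟨N, hN⟩ := eventually_atTop.1 hfreq
    apply hxBad
    refine Set.mem_union_right _ (Set.mem_iUnion.2 ⟨t, Set.mem_iUnion.2 ⟨N, ⟨hxIoo, ?_⟩⟩⟩)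
    intro n hn
    have h1 := hN n (le_trans (le_max_left N 1) hn)
    push_neg at h1
    have h2 : (a m n x : ℝ) < (t:ℝ) * φ n := h1 (le_trans (le_max_right N 1) hn)
    calc a m n x < ⌈(t:ℝ) * φ n⌉₊ := Nat.lt_ceil.2 h2
      _ ≤ cc t n := le_max_right _ _


/-- limsup L_N(x)/φ(N) is a.e. 0 or ∞ according as ∑ 1/φ(n) converges or diverges. -/
theorem stmt_19 (m : ℕ) (hm : 2 ≤ m) (φ : ℕ → ℝ) (hpos : ∀ n, 1 ≤ n → 0 < φ n)
    (hmono : ∀ n k, 1 ≤ n → n ≤ k → φ n ≤ φ k) :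
    ((Summable fun n : ℕ => 1 / φ (n + 1)) →
        ∀ᵐ x ∂(volume.restrict (Set.Ioo 0 (th m))),
          Filter.limsup (fun N : ℕ => (((L m N x : ℝ) / φ N : ℝ) : EReal)) atTop = 0) ∧
      (¬ (Summable fun n : ℕ => 1 / φ (n + 1)) →
        ∀ᵐ x ∂(volume.restrict (Set.Ioo 0 (th m))),
          Filter.limsup (fun N : ℕ => (((L m N x : ℝ) / φ N : ℝ) : EReal)) atTop = ⊤) := by
  exact stmt_19_aux m hm φ hpos hmono
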